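/- The map η defined on generators by η(x)=y_1, η(x_1)=-y, η(y_1)=x, η(y)=-x_1, η(e)=f, η(f)=e, η(h)=h, η(τ)=τ extends to an anti-involution of the infinitesimal Cherednik algebra H_c of gl_2. -/

import Mathlib

set_option maxHeartbeats 1000000

namespace Stmt16Aux

variable {A : Type*} [Ring A]

/-- right-nested monomial in eight letters -/
def M8 (e f h t x y u v : A) (a b c d p q r s : ℕ) : A :=
  e^a*(f^b*(h^c*(t^d*(x^p*(y^q*(u^r*v^s))))))

theorem stepc (u v w : A) (h : u*v = v*u + w) (Z : A) : u*(v*Z) = v*(u*Z) + w*Z := by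
  rw [← mul_assoc, h, add_mul, mul_assoc]

theorem stepz (u v : A) (h : u*v = v*u) (Z : A) : u*(v*Z) = v*(u*Z) := by
  rw [← mul_assoc, h, mul_assoc]

theorem fold (v : A) (n : ℕ) (Z : A) : v*(v^n*Z) = v^(n+1)*Z := by
  rw [← mul_assoc, ← pow_succ']

theorem aux_comm (u v : A) (h : u*v = v*u) (n : ℕ) (R : A) :
    u*(v^n*R) = v^n*(u*R) := by
  induction n generalizing R with
  | zero => simp
  | succ n ih =>
    rw [← fold, stepz u v h, ih, fold]

theorem aux_eig (u v : A) (α : ℤ) (h : u*v = v*u + α•v) (n : ℕ) (R : A) :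
    u*(v^n*R) = v^n*(u*R) + ((n:ℤ)*α)•(v^n*R) := by
  induction n generalizing R with
  | zero => simp
  | succ n ih =>
    rw [← fold v n, stepc u v (α•v) h, ih, smul_mul_assoc, mul_add, mul_smul_comm]
    simp only [fold]
    push_cast
    module

theorem aux_low (E F H : A) (fe : F*E = E*F - H) (he : H*E = E*H + (2:ℤ)•E) (n : ℕ) (R : A) :
    F*(E^(n+1)*R)
      = E^(n+1)*(F*R) - ((n:ℤ)+1)•(E^n*(H*R)) - ((n:ℤ)*((n:ℤ)+1))•(E^n*R) := by
  have fe' : F*E = E*F + (-H) := by rw [fe, sub_eq_add_neg]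
  induction n generalizing R with
  | zero =>
    rw [← fold E 0, stepc F E (-H) fe']
    simp only [fold, pow_zero, zero_add, pow_one, one_mul, mul_one, neg_mul]
    push_cast
    module
  | succ n ih =>
    rw [← fold E (n+1), stepc F E (-H) fe', ih, neg_mul,
      aux_eig H E 2 he (n+1) R, mul_sub, mul_sub, mul_smul_comm, mul_smul_comm]
    simp only [fold]
    push_cast
    module


section M8Lemmas

variable (e f h t x y u v : A)

theorem Pre_E (a b c d p q r s : ℕ) :
    M8 e f h t x y u v (a+1) b c d p q r s = e * M8 e f h t x y u v a b c d p q r s := by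
  simp only [M8, pow_succ', mul_assoc]

theorem Pre_F (b c d p q r s : ℕ) :
    M8 e f h t x y u v 0 (b+1) c d p q r s = f * M8 e f h t x y u v 0 b c d p q r s := by
  simp only [M8, pow_succ', pow_zero, one_mul, mul_assoc]

theorem Pre_H (c d p q r s : ℕ) :
    M8 e f h t x y u v 0 0 (c+1) d p q r s = h * M8 e f h t x y u v 0 0 c d p q r s := by
  simp only [M8, pow_succ', pow_zero, one_mul, mul_assoc]

theorem Pre_T (d p q r s : ℕ) :
    M8 e f h t x y u v 0 0 0 (d+1) p q r s = t * M8 e f h t x y u v 0 0 0 d p q r s := by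
  simp only [M8, pow_succ', pow_zero, one_mul, mul_assoc]

theorem Pre_X (p q r s : ℕ) :
    M8 e f h t x y u v 0 0 0 0 (p+1) q r s = x * M8 e f h t x y u v 0 0 0 0 p q r s := by
  simp only [M8, pow_succ', pow_zero, one_mul, mul_assoc]

theorem Pre_Y (q r s : ℕ) :
    M8 e f h t x y u v 0 0 0 0 0 (q+1) r s = y * M8 e f h t x y u v 0 0 0 0 0 q r s := by
  simp only [M8, pow_succ', pow_zero, one_mul, mul_assoc]

theorem Pre_U (r s : ℕ) :
    M8 e f h t x y u v 0 0 0 0 0 0 (r+1) s = u * M8 e f h t x y u v 0 0 0 0 0 0 r s := by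
  simp only [M8, pow_succ', pow_zero, one_mul, mul_assoc]

theorem App_V (a b c d p q r s : ℕ) :
    M8 e f h t x y u v a b c d p q r (s+1) = M8 e f h t x y u v a b c d p q r s * v := by
  simp only [M8, pow_succ, mul_assoc]

theorem App_U (a b c d p q r : ℕ) :
    M8 e f h t x y u v a b c d p q (r+1) 0 = M8 e f h t x y u v a b c d p q r 0 * u := by
  simp only [M8, pow_succ, pow_zero, mul_one, mul_assoc]

theorem App_Y (a b c d p q : ℕ) :
    M8 e f h t x y u v a b c d p (q+1) 0 0 = M8 e f h t x y u v a b c d p q 0 0 * y := by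
  simp only [M8, pow_succ, pow_zero, mul_one, mul_assoc]

theorem App_X (a b c d p : ℕ) :
    M8 e f h t x y u v a b c d (p+1) 0 0 0 = M8 e f h t x y u v a b c d p 0 0 0 * x := by
  simp only [M8, pow_succ, pow_zero, mul_one, mul_assoc]

theorem App_T (a b c d : ℕ) :
    M8 e f h t x y u v a b c (d+1) 0 0 0 0 = M8 e f h t x y u v a b c d 0 0 0 0 * t := by
  simp only [M8, pow_succ, pow_zero, mul_one, mul_assoc]

theorem App_H (a b c : ℕ) :
    M8 e f h t x y u v a b (c+1) 0 0 0 0 0 = M8 e f h t x y u v a b c 0 0 0 0 0 * h := by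
  simp only [M8, pow_succ, pow_zero, mul_one, mul_assoc]

theorem App_F (a b : ℕ) :
    M8 e f h t x y u v a (b+1) 0 0 0 0 0 0 = M8 e f h t x y u v a b 0 0 0 0 0 0 * f := by
  simp only [M8, pow_succ, pow_zero, mul_one, mul_assoc]

theorem App_Hc (ht : h*t = t*h) (a b c d : ℕ) :
    M8 e f h t x y u v a b (c+1) d 0 0 0 0 = M8 e f h t x y u v a b c d 0 0 0 0 * h := by
  have : (Commute h t) := ht
  simp only [M8, pow_succ, pow_zero, mul_one, mul_assoc]
  rw [← (this.pow_right d).eq]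

theorem App_Ec (hef : e*f = f*e) (a b : ℕ) :
    M8 e f h t x y u v (a+1) b 0 0 0 0 0 0 = M8 e f h t x y u v a b 0 0 0 0 0 0 * e := by
  have : (Commute e f) := hef
  simp only [M8, pow_succ, pow_zero, mul_one, mul_assoc]
  rw [← (this.pow_right b).eq]

theorem Bse_Y (hyx : y*x = x*y) (p q r s : ℕ) :
    y * M8 e f h t x y u v 0 0 0 0 p q r s = M8 e f h t x y u v 0 0 0 0 p (q+1) r s := by
  simp only [M8, pow_zero, one_mul]
  rw [aux_comm y x hyx, fold]

theorem Bse_V (hvu : v*u = u*v) (r s : ℕ) :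
    v * M8 e f h t x y u v 0 0 0 0 0 0 r s = M8 e f h t x y u v 0 0 0 0 0 0 r (s+1) := by
  simp only [M8, pow_zero, one_mul]
  rw [aux_comm v u hvu]
  rw [← pow_succ']

theorem LM_E (a b c d p q r s : ℕ) :
    e * M8 e f h t x y u v a b c d p q r s = M8 e f h t x y u v (a+1) b c d p q r s :=
  (Pre_E e f h t x y u v a b c d p q r s).symm

theorem LM_T (cte : t*e = e*t) (ctf : t*f = f*t) (cth : t*h = h*t) (a b c d p q r s : ℕ) :
    t * M8 e f h t x y u v a b c d p q r s = M8 e f h t x y u v a b c (d+1) p q r s := by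
  unfold M8
  rw [aux_comm t e cte, aux_comm t f ctf, aux_comm t h cth, fold]

theorem LM_H (he : h*e = e*h + (2:ℤ)•e) (hf : h*f = f*h + (-2:ℤ)•f) (a b c d p q r s : ℕ) :
    h * M8 e f h t x y u v a b c d p q r s
      = M8 e f h t x y u v a b (c+1) d p q r s
        + (2*(a:ℤ) - 2*(b:ℤ))•M8 e f h t x y u v a b c d p q r s := by
  unfold M8
  rw [aux_eig h e 2 he a, aux_eig h f (-2) hf b, fold, mul_add, mul_smul_comm]
  push_cast
  module

theorem LM_F0 (b c d p q r s : ℕ) :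
    f * M8 e f h t x y u v 0 b c d p q r s = M8 e f h t x y u v 0 (b+1) c d p q r s := by
  simp only [M8, pow_succ', pow_zero, one_mul, mul_assoc]

theorem LM_F1 (fe : f*e = e*f - h) (he : h*e = e*h + (2:ℤ)•e) (hf : h*f = f*h + (-2:ℤ)•f)
    (a b c d p q r s : ℕ) :
    f * M8 e f h t x y u v (a+1) b c d p q r s
      = M8 e f h t x y u v (a+1) (b+1) c d p q r s
        + (-((a:ℤ)+1))•M8 e f h t x y u v a b (c+1) d p q r s
        + (((a:ℤ)+1)*(2*(b:ℤ)-(a:ℤ)))•M8 e f h t x y u v a b c d p q r s := by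
  unfold M8
  rw [aux_low e f h fe he a, fold, aux_eig h f (-2) hf b, fold, mul_add, mul_smul_comm]
  push_cast
  module

open MulOpposite in
theorem M8_op (a b c d p q r s : ℕ) :
    M8 (op e) (op f) (op h) (op t) (op x) (op y) (op u) (op v) a b c d p q r s
      = op (M8 v u y x t h f e s r q p d c b a) := by
  unfold M8
  simp only [← op_pow, ← op_mul]
  congr 1
  simp only [mul_assoc]

end M8Lemmas

end Stmt16Aux

open Stmt16Aux MulOpposite

theorem stmt16 {k : Type} [Field k] [CharZero k] {A : Type} [Ring A] [Algebra k A]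
    (ee ff hh tt xx yy x1 y1 : A) (c fc gc : A)
    (hHE : ⁅hh, ee⁆ = 2*ee) (hHF : ⁅hh, ff⁆ = -(2*ff)) (hEF : ⁅ee, ff⁆ = hh)
    (hTE : ⁅tt, ee⁆ = 0) (hTF : ⁅tt, ff⁆ = 0) (hTH : ⁅tt, hh⁆ = 0)
    (hEX : ⁅ee, xx⁆ = 0) (hEY : ⁅ee, yy⁆ = xx)
    (hFX : ⁅ff, xx⁆ = yy) (hFY : ⁅ff, yy⁆ = 0)
    (hHX : ⁅hh, xx⁆ = xx) (hHY : ⁅hh, yy⁆ = -yy)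
    (hTX : ⁅tt, xx⁆ = xx) (hTY : ⁅tt, yy⁆ = yy)
    (hEX1 : ⁅ee, x1⁆ = 0) (hEY1 : ⁅ee, y1⁆ = x1)
    (hFX1 : ⁅ff, x1⁆ = y1) (hFY1 : ⁅ff, y1⁆ = 0)
    (hHX1 : ⁅hh, x1⁆ = x1) (hHY1 : ⁅hh, y1⁆ = -y1)
    (hTX1 : ⁅tt, x1⁆ = -x1) (hTY1 : ⁅tt, y1⁆ = -y1)
    (hcmmem : c ∈ Algebra.adjoin k ({ee, ff, hh, tt} : Set A))
    (hcmc : ∀ u ∈ Algebra.adjoin k ({ee, ff, hh, tt} : Set A), c * u = u * c)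
    (hfcmmem : fc ∈ Algebra.adjoin k ({ee, ff, hh, tt} : Set A))
    (hfcmc : ∀ u ∈ Algebra.adjoin k ({ee, ff, hh, tt} : Set A), fc * u = u * fc)
    (hgcmmem : gc ∈ Algebra.adjoin k ({ee, ff, hh, tt} : Set A))
    (hgcmc : ∀ u ∈ Algebra.adjoin k ({ee, ff, hh, tt} : Set A), gc * u = u * gc)
    (hcx : ⁅c, xx⁆ = (2*hh*fc + gc)*xx + 4*ee*fc*yy)
    (hcy : ⁅c, yy⁆ = (-(2*hh*fc) + gc)*yy + 4*ff*fc*xx)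
    (hXY : ⁅xx, yy⁆ = 0) (hX1Y1 : ⁅x1, y1⁆ = 0)
    (hY1X : ⁅y1, xx⁆ = 2*hh*fc + gc)
    (hX1X : ⁅x1, xx⁆ = -(4*ee*fc))
    (hY1Y : ⁅y1, yy⁆ = 4*ff*fc)
    (hX1Y : ⁅x1, yy⁆ = 2*hh*fc - gc)
    (hgen : Algebra.adjoin k ({ee, ff, hh, tt, xx, yy, x1, y1} : Set A) = ⊤)
    (hPBW : LinearIndependent k (fun m : Fin 8 → ℕ =>
      ee ^ m 0 * ff ^ m 1 * hh ^ m 2 * tt ^ m 3 * xx ^ m 4 * yy ^ m 5 * x1 ^ m 6 * y1 ^ m 7))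
    :
    ∃ η : A →ₗ[k] A,
      (∀ a b : A, η (a * b) = η b * η a) ∧
      (∀ a : A, η (η a) = a) ∧
      η xx = y1 ∧ η x1 = -yy ∧ η y1 = xx ∧ η yy = -x1 ∧
      η ee = ff ∧ η ff = ee ∧ η hh = hh ∧ η tt = tt := by
  -- multiplication forms of the bracket relations
  have mHE : hh*ee = ee*hh + (2:ℤ)•ee := by
    have hq := hHE; rw [Ring.lie_def, sub_eq_iff_eq_add] at hq
    rw [hq]; push_cast [zsmul_eq_mul]; first | noncomm_ring | abel
  have mHF : hh*ff = ff*hh + (-2:ℤ)•ff := by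
    have hq := hHF; rw [Ring.lie_def, sub_eq_iff_eq_add] at hq
    rw [hq]; push_cast [zsmul_eq_mul]; first | noncomm_ring | abel
  have mFE : ff*ee = ee*ff - hh := by
    have hq := hEF; rw [Ring.lie_def, sub_eq_iff_eq_add] at hq
    rw [hq]; push_cast [zsmul_eq_mul]; first | noncomm_ring | abel
  have cTE : tt*ee = ee*tt := by
    have hq := hTE; rw [Ring.lie_def, sub_eq_iff_eq_add] at hq
    rw [hq]; push_cast [zsmul_eq_mul]; first | noncomm_ring | abel
  have cTF : tt*ff = ff*tt := by
    have hq := hTF; rw [Ring.lie_def, sub_eq_iff_eq_add] at hq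
    rw [hq]; push_cast [zsmul_eq_mul]; first | noncomm_ring | abel
  have cTH : tt*hh = hh*tt := by
    have hq := hTH; rw [Ring.lie_def, sub_eq_iff_eq_add] at hq
    rw [hq]; push_cast [zsmul_eq_mul]; first | noncomm_ring | abel
  have mXE : xx*ee = ee*xx := by
    have hq := hEX; rw [Ring.lie_def, sub_eq_iff_eq_add] at hq
    rw [hq]; push_cast [zsmul_eq_mul]; first | noncomm_ring | abel
  have mYE : yy*ee = ee*yy + (-xx) := by
    have hq := hEY; rw [Ring.lie_def, sub_eq_iff_eq_add] at hq
    rw [hq]; push_cast [zsmul_eq_mul]; first | noncomm_ring | abel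
  have mXF : xx*ff = ff*xx + (-yy) := by
    have hq := hFX; rw [Ring.lie_def, sub_eq_iff_eq_add] at hq
    rw [hq]; push_cast [zsmul_eq_mul]; first | noncomm_ring | abel
  have mYF : yy*ff = ff*yy := by
    have hq := hFY; rw [Ring.lie_def, sub_eq_iff_eq_add] at hq
    rw [hq]; push_cast [zsmul_eq_mul]; first | noncomm_ring | abel
  have mXH : xx*hh = hh*xx + (-xx) := by
    have hq := hHX; rw [Ring.lie_def, sub_eq_iff_eq_add] at hq
    rw [hq]; push_cast [zsmul_eq_mul]; first | noncomm_ring | abel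
  have mYH : yy*hh = hh*yy + yy := by
    have hq := hHY; rw [Ring.lie_def, sub_eq_iff_eq_add] at hq
    rw [hq]; push_cast [zsmul_eq_mul]; first | noncomm_ring | abel
  have mXT : xx*tt = tt*xx + (-xx) := by
    have hq := hTX; rw [Ring.lie_def, sub_eq_iff_eq_add] at hq
    rw [hq]; push_cast [zsmul_eq_mul]; first | noncomm_ring | abel
  have mYT : yy*tt = tt*yy + (-yy) := by
    have hq := hTY; rw [Ring.lie_def, sub_eq_iff_eq_add] at hq
    rw [hq]; push_cast [zsmul_eq_mul]; first | noncomm_ring | abel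
  have mX1E : x1*ee = ee*x1 := by
    have hq := hEX1; rw [Ring.lie_def, sub_eq_iff_eq_add] at hq
    rw [hq]; push_cast [zsmul_eq_mul]; first | noncomm_ring | abel
  have mY1E : y1*ee = ee*y1 + (-x1) := by
    have hq := hEY1; rw [Ring.lie_def, sub_eq_iff_eq_add] at hq
    rw [hq]; push_cast [zsmul_eq_mul]; first | noncomm_ring | abel
  have mX1F : x1*ff = ff*x1 + (-y1) := by
    have hq := hFX1; rw [Ring.lie_def, sub_eq_iff_eq_add] at hq
    rw [hq]; push_cast [zsmul_eq_mul]; first | noncomm_ring | abel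
  have mY1F : y1*ff = ff*y1 := by
    have hq := hFY1; rw [Ring.lie_def, sub_eq_iff_eq_add] at hq
    rw [hq]; push_cast [zsmul_eq_mul]; first | noncomm_ring | abel
  have mX1H : x1*hh = hh*x1 + (-x1) := by
    have hq := hHX1; rw [Ring.lie_def, sub_eq_iff_eq_add] at hq
    rw [hq]; push_cast [zsmul_eq_mul]; first | noncomm_ring | abel
  have mY1H : y1*hh = hh*y1 + y1 := by
    have hq := hHY1; rw [Ring.lie_def, sub_eq_iff_eq_add] at hq
    rw [hq]; push_cast [zsmul_eq_mul]; first | noncomm_ring | abel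
  have mX1T : x1*tt = tt*x1 + x1 := by
    have hq := hTX1; rw [Ring.lie_def, sub_eq_iff_eq_add] at hq
    rw [hq]; push_cast [zsmul_eq_mul]; first | noncomm_ring | abel
  have mY1T : y1*tt = tt*y1 + y1 := by
    have hq := hTY1; rw [Ring.lie_def, sub_eq_iff_eq_add] at hq
    rw [hq]; push_cast [zsmul_eq_mul]; first | noncomm_ring | abel
  have mYX : yy*xx = xx*yy := by
    have hq := hXY; rw [Ring.lie_def, sub_eq_iff_eq_add] at hq
    rw [hq]; push_cast [zsmul_eq_mul]; first | noncomm_ring | abel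
  have mY1X1 : y1*x1 = x1*y1 := by
    have hq := hX1Y1; rw [Ring.lie_def, sub_eq_iff_eq_add] at hq
    rw [hq]; push_cast [zsmul_eq_mul]; first | noncomm_ring | abel
  have mX1X : x1*xx = xx*x1 + (-(4*ee*fc)) := by
    have hq := hX1X; rw [Ring.lie_def, sub_eq_iff_eq_add] at hq
    rw [hq]; push_cast [zsmul_eq_mul]; first | noncomm_ring | abel
  have mY1X : y1*xx = xx*y1 + (2*hh*fc + gc) := by
    have hq := hY1X; rw [Ring.lie_def, sub_eq_iff_eq_add] at hq
    rw [hq]; push_cast [zsmul_eq_mul]; first | noncomm_ring | abel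
  have mX1Y : x1*yy = yy*x1 + (2*hh*fc - gc) := by
    have hq := hX1Y; rw [Ring.lie_def, sub_eq_iff_eq_add] at hq
    rw [hq]; push_cast [zsmul_eq_mul]; first | noncomm_ring | abel
  have mY1Y : y1*yy = yy*y1 + (4*ff*fc) := by
    have hq := hY1Y; rw [Ring.lie_def, sub_eq_iff_eq_add] at hq
    rw [hq]; push_cast [zsmul_eq_mul]; first | noncomm_ring | abel

  -- the spanning submodule
  set v8 : (Fin 8 → ℕ) → A := (fun m : Fin 8 → ℕ =>
      ee ^ m 0 * ff ^ m 1 * hh ^ m 2 * tt ^ m 3 * xx ^ m 4 * yy ^ m 5 * x1 ^ m 6 * y1 ^ m 7)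
    with hv8
  set S : Submodule k A := Submodule.span k (Set.range v8) with hS
  have famM2 : ∀ m : Fin 8 → ℕ,
      v8 m = M8 ee ff hh tt xx yy x1 y1 (m 0) (m 1) (m 2) (m 3) (m 4) (m 5) (m 6) (m 7) := by
    intro m; simp only [hv8, M8, mul_assoc]
  have memS : ∀ a b c d p q r s : ℕ, M8 ee ff hh tt xx yy x1 y1 a b c d p q r s ∈ S := by
    intro a b c d p q r s
    refine Submodule.subset_span ⟨![a,b,c,d,p,q,r,s], ?_⟩
    rw [famM2]; rfl
  have extendS : ∀ g : A, (∀ a b c d p q r s, g * M8 ee ff hh tt xx yy x1 y1 a b c d p q r s ∈ S) →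
      ∀ z ∈ S, g * z ∈ S := by
    intro g hg z hz
    induction hz using Submodule.span_induction with
    | mem w hw => obtain ⟨m, rfl⟩ := hw; rw [famM2 m]; exact hg _ _ _ _ _ _ _ _
    | zero => rw [mul_zero]; exact zero_mem S
    | add a b _ _ ha hb => rw [mul_add]; exact add_mem ha hb
    | smul r a _ ha => rw [mul_smul_comm]; exact Submodule.smul_mem _ _ ha
  have P_E : ∀ a b c d p q r s : ℕ, ee * M8 ee ff hh tt xx yy x1 y1 a b c d p q r s ∈ S := by
    intro a b c d p q r s; rw [LM_E]; exact memS _ _ _ _ _ _ _ _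
  have P_T : ∀ a b c d p q r s : ℕ, tt * M8 ee ff hh tt xx yy x1 y1 a b c d p q r s ∈ S := by
    intro a b c d p q r s; rw [LM_T _ _ _ _ _ _ _ _ cTE cTF cTH]; exact memS _ _ _ _ _ _ _ _
  have P_H : ∀ a b c d p q r s : ℕ, hh * M8 ee ff hh tt xx yy x1 y1 a b c d p q r s ∈ S := by
    intro a b c d p q r s; rw [LM_H _ _ _ _ _ _ _ _ mHE mHF]
    exact add_mem (memS _ _ _ _ _ _ _ _) (zsmul_mem (memS _ _ _ _ _ _ _ _) _)
  have P_F : ∀ a b c d p q r s : ℕ, ff * M8 ee ff hh tt xx yy x1 y1 a b c d p q r s ∈ S := by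
    intro a b c d p q r s
    rcases a with _|a'
    · rw [LM_F0]; exact memS _ _ _ _ _ _ _ _
    · rw [LM_F1 _ _ _ _ _ _ _ _ mFE mHE mHF]
      exact add_mem (add_mem (memS _ _ _ _ _ _ _ _) (zsmul_mem (memS _ _ _ _ _ _ _ _) _))
        (zsmul_mem (memS _ _ _ _ _ _ _ _) _)
  have SE := extendS ee P_E
  have SF := extendS ff P_F
  have SH := extendS hh P_H
  have ST := extendS tt P_T
  have adT : ∀ v ∈ (Algebra.adjoin k ({ee, ff, hh, tt} : Set A)), ∀ z ∈ S, v * z ∈ S := by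
    intro v hv
    induction hv using Algebra.adjoin_induction with
    | mem g hg =>
      simp only [Set.mem_insert_iff, Set.mem_singleton_iff] at hg
      rcases hg with rfl|rfl|rfl|rfl
      exacts [SE, SF, SH, ST]
    | algebraMap r => intro z hz; rw [← Algebra.smul_def]; exact Submodule.smul_mem _ _ hz
    | add u w hu hw ihu ihw => intro z hz; rw [add_mul]; exact add_mem (ihu z hz) (ihw z hz)
    | mul u w hu hw ihu ihw => intro z hz; rw [mul_assoc]; exact ihu _ (ihw z hz)
  have hee : ee ∈ Algebra.adjoin k ({ee, ff, hh, tt} : Set A) := Algebra.subset_adjoin (by simp)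
  have hff : ff ∈ Algebra.adjoin k ({ee, ff, hh, tt} : Set A) := Algebra.subset_adjoin (by simp)
  have hhh : hh ∈ Algebra.adjoin k ({ee, ff, hh, tt} : Set A) := Algebra.subset_adjoin (by simp)
  have htt : tt ∈ Algebra.adjoin k ({ee, ff, hh, tt} : Set A) := Algebra.subset_adjoin (by simp)
  have h2m : (2:A) ∈ Algebra.adjoin k ({ee, ff, hh, tt} : Set A) := by
    have := Subalgebra.natCast_mem (Algebra.adjoin k ({ee, ff, hh, tt} : Set A)) 2
    exact_mod_cast this
  have h4m : (4:A) ∈ Algebra.adjoin k ({ee, ff, hh, tt} : Set A) := by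
    have := Subalgebra.natCast_mem (Algebra.adjoin k ({ee, ff, hh, tt} : Set A)) 4
    exact_mod_cast this
  have mem4 : (4*ee*fc) ∈ Algebra.adjoin k ({ee, ff, hh, tt} : Set A) :=
    mul_mem (mul_mem h4m hee) hfcmmem
  have memY1X : (2*hh*fc + gc) ∈ Algebra.adjoin k ({ee, ff, hh, tt} : Set A) :=
    add_mem (mul_mem (mul_mem h2m hhh) hfcmmem) hgcmmem
  have memX1Y : (2*hh*fc - gc) ∈ Algebra.adjoin k ({ee, ff, hh, tt} : Set A) :=
    sub_mem (mul_mem (mul_mem h2m hhh) hfcmmem) hgcmmem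
  have memY1Y : (4*ff*fc) ∈ Algebra.adjoin k ({ee, ff, hh, tt} : Set A) :=
    mul_mem (mul_mem h4m hff) hfcmmem
  have PXY : ∀ n a b c d p q r s : ℕ, a+b+c+d = n →
      xx * M8 ee ff hh tt xx yy x1 y1 a b c d p q r s ∈ S ∧ yy * M8 ee ff hh tt xx yy x1 y1 a b c d p q r s ∈ S := by
    intro n
    induction n with
    | zero =>
      intro a b c d p q r s hn
      obtain rfl : a = 0 := by omega
      obtain rfl : b = 0 := by omega
      obtain rfl : c = 0 := by omega
      obtain rfl : d = 0 := by omega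
      constructor
      · rw [← Pre_X]; exact memS _ _ _ _ _ _ _ _
      · rw [Bse_Y _ _ _ _ _ _ _ _ mYX]; exact memS _ _ _ _ _ _ _ _
    | succ n ih =>
      intro a b c d p q r s hn
      rcases a with _|a'
      · rcases b with _|b'
        · rcases c with _|c'
          · rcases d with _|d'
            · omega
            · constructor
              · rw [Pre_T, stepc xx tt (-xx) mXT]
                exact add_mem (ST _ ((ih 0 0 0 d' p q r s (by omega)).1))
                  (by rw [neg_mul]; exact neg_mem ((ih 0 0 0 d' p q r s (by omega)).1))
              · rw [Pre_T, stepc yy tt (-yy) mYT]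
                exact add_mem (ST _ ((ih 0 0 0 d' p q r s (by omega)).2))
                  (by rw [neg_mul]; exact neg_mem ((ih 0 0 0 d' p q r s (by omega)).2))
          · constructor
            · rw [Pre_H, stepc xx hh (-xx) mXH]
              exact add_mem (SH _ ((ih 0 0 c' d p q r s (by omega)).1))
                (by rw [neg_mul]; exact neg_mem ((ih 0 0 c' d p q r s (by omega)).1))
            · rw [Pre_H, stepc yy hh yy mYH]
              exact add_mem (SH _ ((ih 0 0 c' d p q r s (by omega)).2))
                ((ih 0 0 c' d p q r s (by omega)).2)
        · constructor
          · rw [Pre_F, stepc xx ff (-yy) mXF]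
            exact add_mem (SF _ ((ih 0 b' c d p q r s (by omega)).1))
              (by rw [neg_mul]; exact neg_mem ((ih 0 b' c d p q r s (by omega)).2))
          · rw [Pre_F, stepz yy ff mYF]
            exact SF _ ((ih 0 b' c d p q r s (by omega)).2)
      · constructor
        · rw [Pre_E, stepz xx ee mXE]
          exact SE _ ((ih a' b c d p q r s (by omega)).1)
        · rw [Pre_E, stepc yy ee (-xx) mYE]
          exact add_mem (SE _ ((ih a' b c d p q r s (by omega)).2))
            (by rw [neg_mul]; exact neg_mem ((ih a' b c d p q r s (by omega)).1))
  have SX := extendS xx (fun a b c d p q r s => (PXY (a+b+c+d) a b c d p q r s rfl).1)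
  have SY := extendS yy (fun a b c d p q r s => (PXY (a+b+c+d) a b c d p q r s rfl).2)
  have PX1Y1 : ∀ n a b c d p q r s : ℕ, a+b+c+d+p+q = n →
      x1 * M8 ee ff hh tt xx yy x1 y1 a b c d p q r s ∈ S ∧ y1 * M8 ee ff hh tt xx yy x1 y1 a b c d p q r s ∈ S := by
    intro n
    induction n with
    | zero =>
      intro a b c d p q r s hn
      obtain rfl : a = 0 := by omega
      obtain rfl : b = 0 := by omega
      obtain rfl : c = 0 := by omega
      obtain rfl : d = 0 := by omega
      obtain rfl : p = 0 := by omega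
      obtain rfl : q = 0 := by omega
      constructor
      · rw [← Pre_U]; exact memS _ _ _ _ _ _ _ _
      · rw [Bse_V _ _ _ _ _ _ _ _ mY1X1]; exact memS _ _ _ _ _ _ _ _
    | succ n ih =>
      intro a b c d p q r s hn
      rcases a with _|a'
      · rcases b with _|b'
        · rcases c with _|c'
          · rcases d with _|d'
            · rcases p with _|p'
              · rcases q with _|q'
                · omega
                · constructor
                  · rw [Pre_Y, stepc x1 yy (2*hh*fc - gc) mX1Y]
                    exact add_mem (SY _ ((ih 0 0 0 0 0 q' r s (by omega)).1))
                      (adT _ memX1Y _ (memS _ _ _ _ _ _ _ _))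
                  · rw [Pre_Y, stepc y1 yy (4*ff*fc) mY1Y]
                    exact add_mem (SY _ ((ih 0 0 0 0 0 q' r s (by omega)).2))
                      (adT _ memY1Y _ (memS _ _ _ _ _ _ _ _))
              · constructor
                · rw [Pre_X, stepc x1 xx (-(4*ee*fc)) mX1X]
                  exact add_mem (SX _ ((ih 0 0 0 0 p' q r s (by omega)).1))
                    (by rw [neg_mul]; exact neg_mem (adT _ mem4 _ (memS _ _ _ _ _ _ _ _)))
                · rw [Pre_X, stepc y1 xx (2*hh*fc + gc) mY1X]
                  exact add_mem (SX _ ((ih 0 0 0 0 p' q r s (by omega)).2))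
                    (adT _ memY1X _ (memS _ _ _ _ _ _ _ _))
            · constructor
              · rw [Pre_T, stepc x1 tt x1 mX1T]
                exact add_mem (ST _ ((ih 0 0 0 d' p q r s (by omega)).1))
                  ((ih 0 0 0 d' p q r s (by omega)).1)
              · rw [Pre_T, stepc y1 tt y1 mY1T]
                exact add_mem (ST _ ((ih 0 0 0 d' p q r s (by omega)).2))
                  ((ih 0 0 0 d' p q r s (by omega)).2)
          · constructor
            · rw [Pre_H, stepc x1 hh (-x1) mX1H]
              exact add_mem (SH _ ((ih 0 0 c' d p q r s (by omega)).1))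
                (by rw [neg_mul]; exact neg_mem ((ih 0 0 c' d p q r s (by omega)).1))
            · rw [Pre_H, stepc y1 hh y1 mY1H]
              exact add_mem (SH _ ((ih 0 0 c' d p q r s (by omega)).2))
                ((ih 0 0 c' d p q r s (by omega)).2)
        · constructor
          · rw [Pre_F, stepc x1 ff (-y1) mX1F]
            exact add_mem (SF _ ((ih 0 b' c d p q r s (by omega)).1))
              (by rw [neg_mul]; exact neg_mem ((ih 0 b' c d p q r s (by omega)).2))
          · rw [Pre_F, stepz y1 ff mY1F]
            exact SF _ ((ih 0 b' c d p q r s (by omega)).2)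
      · constructor
        · rw [Pre_E, stepz x1 ee mX1E]
          exact SE _ ((ih a' b c d p q r s (by omega)).1)
        · rw [Pre_E, stepc y1 ee (-x1) mY1E]
          exact add_mem (SE _ ((ih a' b c d p q r s (by omega)).2))
            (by rw [neg_mul]; exact neg_mem ((ih a' b c d p q r s (by omega)).1))
  have SX1 := extendS x1 (fun a b c d p q r s => (PX1Y1 (a+b+c+d+p+q) a b c d p q r s rfl).1)
  have SY1 := extendS y1 (fun a b c d p q r s => (PX1Y1 (a+b+c+d+p+q) a b c d p q r s rfl).2)
  have oneS : (1:A) ∈ S := by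
    have := memS 0 0 0 0 0 0 0 0
    simpa [M8] using this
  have Stop : ∀ a : A, a ∈ S := by
    intro a
    have ha : a ∈ Algebra.adjoin k ({ee, ff, hh, tt, xx, yy, x1, y1} : Set A) := by
      rw [hgen]; trivial
    have key : ∀ z ∈ S, a * z ∈ S := by
      induction ha using Algebra.adjoin_induction with
      | mem g hg =>
        simp only [Set.mem_insert_iff, Set.mem_singleton_iff] at hg
        rcases hg with rfl|rfl|rfl|rfl|rfl|rfl|rfl|rfl
        exacts [SE, SF, SH, ST, SX, SY, SX1, SY1]
      | algebraMap r => intro z hz; rw [← Algebra.smul_def]; exact Submodule.smul_mem _ _ hz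
      | add u w hu hw ihu ihw => intro z hz; rw [add_mul]; exact add_mem (ihu z hz) (ihw z hz)
      | mul u w hu hw ihu ihw => intro z hz; rw [mul_assoc]; exact ihu _ (ihw z hz)
    have := key 1 oneS
    rwa [mul_one] at this

  have hspan : ⊤ ≤ Submodule.span k (Set.range v8) := by
    intro a _; rw [← hS]; exact Stop a
  set B : Module.Basis (Fin 8 → ℕ) k A := Module.Basis.mk hPBW hspan with hB
  set η : A →ₗ[k] A := (B.constr k) (fun m : Fin 8 → ℕ =>
    M8 xx (-yy) (-x1) y1 tt hh ee ff (m 7) (m 6) (m 5) (m 4) (m 3) (m 2) (m 1) (m 0)) with hη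
  have hBm : ∀ m : Fin 8 → ℕ, (B m : A) = M8 ee ff hh tt xx yy x1 y1 (m 0) (m 1) (m 2) (m 3) (m 4) (m 5) (m 6) (m 7) := by
    intro m; rw [hB, Module.Basis.mk_apply, famM2]
  have ηMon : ∀ a b c d p q r s : ℕ,
      η (M8 ee ff hh tt xx yy x1 y1 a b c d p q r s) = M8 xx (-yy) (-x1) y1 tt hh ee ff s r q p d c b a := by
    intro a b c d p q r s
    have h1 : (B ![a,b,c,d,p,q,r,s] : A) = M8 ee ff hh tt xx yy x1 y1 a b c d p q r s := by
      rw [hBm]; rfl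
    rw [← h1, hη, Module.Basis.constr_basis]; rfl
  have vEE : η ee = ff := by have h := ηMon 1 0 0 0 0 0 0 0; simpa [M8] using h
  have vFF : η ff = ee := by have h := ηMon 0 1 0 0 0 0 0 0; simpa [M8] using h
  have vHH : η hh = hh := by have h := ηMon 0 0 1 0 0 0 0 0; simpa [M8] using h
  have vTT : η tt = tt := by have h := ηMon 0 0 0 1 0 0 0 0; simpa [M8] using h
  have vXX : η xx = y1 := by have h := ηMon 0 0 0 0 1 0 0 0; simpa [M8] using h
  have vYY : η yy = -x1 := by have h := ηMon 0 0 0 0 0 1 0 0; simpa [M8] using h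
  have vX1 : η x1 = -yy := by have h := ηMon 0 0 0 0 0 0 1 0; simpa [M8] using h
  have vY1 : η y1 = xx := by have h := ηMon 0 0 0 0 0 0 0 1; simpa [M8] using h
  have vONE : η 1 = 1 := by have h := ηMon 0 0 0 0 0 0 0 0; simpa [M8] using h
  -- opposite-algebra relations for the image tuple
  have oTE : (op tt)*(op ff) = (op ff)*(op tt) := by
    apply unop_injective; simp only [unop_mul, unop_op]; rw [cTF]
  have oTF : (op tt)*(op ee) = (op ee)*(op tt) := by
    apply unop_injective; simp only [unop_mul, unop_op]; rw [cTE]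
  have oTH : (op tt)*(op hh) = (op hh)*(op tt) := by
    apply unop_injective; simp only [unop_mul, unop_op]; rw [cTH]
  have oHE : (op hh)*(op ff) = (op ff)*(op hh) + (2:ℤ)•(op ff) := by
    apply unop_injective
    simp only [unop_add, unop_mul, unop_smul, unop_op]
    rw [mHF]; module
  have oHF : (op hh)*(op ee) = (op ee)*(op hh) + (-2:ℤ)•(op ee) := by
    apply unop_injective
    simp only [unop_add, unop_mul, unop_smul, unop_op]
    rw [mHE]; module
  have oFE : (op ee)*(op ff) = (op ff)*(op ee) - (op hh) := by
    apply unop_injective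
    simp only [unop_sub, unop_mul, unop_op]
    exact mFE
  have Nop : ∀ a b c d p q r s : ℕ, M8 (op ff) (op ee) (op hh) (op tt) (op y1) (op (-x1)) (op (-yy)) (op xx) a b c d p q r s = op (M8 xx (-yy) (-x1) y1 tt hh ee ff s r q p d c b a) :=
    fun a b c d p q r s => M8_op ff ee hh tt y1 (-x1) (-yy) xx a b c d p q r s
  have NR_T : ∀ a b c d p q r s : ℕ,
      M8 xx (-yy) (-x1) y1 tt hh ee ff s r q p d c b a * tt = M8 xx (-yy) (-x1) y1 tt hh ee ff s r q p (d+1) c b a := by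
    intro a b c d p q r s
    apply op_injective
    rw [op_mul, ← Nop a b c d p q r s, LM_T _ _ _ _ _ _ _ _ oTE oTF oTH, Nop]
  have NR_H : ∀ a b c d p q r s : ℕ,
      M8 xx (-yy) (-x1) y1 tt hh ee ff s r q p d c b a * hh
        = M8 xx (-yy) (-x1) y1 tt hh ee ff s r q p d (c+1) b a + (2*(a:ℤ) - 2*(b:ℤ))•M8 xx (-yy) (-x1) y1 tt hh ee ff s r q p d c b a := by
    intro a b c d p q r s
    apply op_injective
    rw [op_mul, op_add, op_smul, ← Nop a b c d p q r s, LM_H _ _ _ _ _ _ _ _ oHE oHF,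
      Nop, Nop]
  have NR_F0 : ∀ b c d p q r s : ℕ,
      M8 xx (-yy) (-x1) y1 tt hh ee ff s r q p d c b 0 * ee = M8 xx (-yy) (-x1) y1 tt hh ee ff s r q p d c (b+1) 0 := by
    intro b c d p q r s
    apply op_injective
    rw [op_mul, ← Nop 0 b c d p q r s, LM_F0, Nop]
  have NR_F1 : ∀ a b c d p q r s : ℕ,
      M8 xx (-yy) (-x1) y1 tt hh ee ff s r q p d c b (a+1) * ee
        = M8 xx (-yy) (-x1) y1 tt hh ee ff s r q p d c (b+1) (a+1) + (-((a:ℤ)+1))•M8 xx (-yy) (-x1) y1 tt hh ee ff s r q p d (c+1) b a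
          + (((a:ℤ)+1)*(2*(b:ℤ)-(a:ℤ)))•M8 xx (-yy) (-x1) y1 tt hh ee ff s r q p d c b a := by
    intro a b c d p q r s
    apply op_injective
    rw [op_add, op_add, op_smul, op_smul, op_mul, ← Nop (a+1) b c d p q r s,
      LM_F1 _ _ _ _ _ _ _ _ oFE oHE oHF, Nop, Nop, Nop]
  -- the four gl2 compatibility lemmas
  have K_E : ∀ a b c d p q r s : ℕ,
      η (ee * M8 ee ff hh tt xx yy x1 y1 a b c d p q r s) = M8 xx (-yy) (-x1) y1 tt hh ee ff s r q p d c b a * ff := by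
    intro a b c d p q r s
    rw [LM_E, ηMon]
    exact App_V _ _ _ _ _ _ _ _ _ _ _ _ _ _ _ _
  have K_T : ∀ a b c d p q r s : ℕ,
      η (tt * M8 ee ff hh tt xx yy x1 y1 a b c d p q r s) = M8 xx (-yy) (-x1) y1 tt hh ee ff s r q p d c b a * tt := by
    intro a b c d p q r s
    rw [LM_T _ _ _ _ _ _ _ _ cTE cTF cTH, ηMon, NR_T]
  have K_H : ∀ a b c d p q r s : ℕ,
      η (hh * M8 ee ff hh tt xx yy x1 y1 a b c d p q r s) = M8 xx (-yy) (-x1) y1 tt hh ee ff s r q p d c b a * hh := by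
    intro a b c d p q r s
    rw [LM_H _ _ _ _ _ _ _ _ mHE mHF, map_add, map_zsmul, ηMon, ηMon, NR_H]
  have K_F : ∀ a b c d p q r s : ℕ,
      η (ff * M8 ee ff hh tt xx yy x1 y1 a b c d p q r s) = M8 xx (-yy) (-x1) y1 tt hh ee ff s r q p d c b a * ee := by
    intro a b c d p q r s
    rcases a with _|a'
    · rw [LM_F0, ηMon, NR_F0]
    · rw [LM_F1 _ _ _ _ _ _ _ _ mFE mHE mHF, map_add, map_add, map_zsmul, map_zsmul,
        ηMon, ηMon, ηMon, NR_F1]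
  have extendK : ∀ (g w : A), (∀ a b c d p q r s : ℕ,
      η (g * M8 ee ff hh tt xx yy x1 y1 a b c d p q r s) = M8 xx (-yy) (-x1) y1 tt hh ee ff s r q p d c b a * w) →
      ∀ bb : A, η (g * bb) = η bb * w := by
    intro g w hgw bb
    have hmaps : η ∘ₗ LinearMap.mulLeft k g = LinearMap.mulRight k w ∘ₗ η := by
      apply Module.Basis.ext B
      intro m
      simp only [LinearMap.coe_comp, Function.comp_apply, LinearMap.mulLeft_apply,
        LinearMap.mulRight_apply]
      rw [hBm, hgw, ηMon]
    simpa using LinearMap.congr_fun hmaps bb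
  have KE' := extendK ee ff K_E
  have KF' := extendK ff ee K_F
  have KH' := extendK hh hh K_H
  have KT' := extendK tt tt K_T

  -- the restriction of η to the gl2 part is compatible with multiplication
  have adD : ∀ v ∈ (Algebra.adjoin k ({ee, ff, hh, tt} : Set A)),
      ∀ bb : A, η (v * bb) = η bb * η v := by
    intro v hv
    induction hv using Algebra.adjoin_induction with
    | mem g hg =>
      simp only [Set.mem_insert_iff, Set.mem_singleton_iff] at hg
      rcases hg with rfl|rfl|rfl|rfl
      · intro bb; rw [KE' bb, vEE]
      · intro bb; rw [KF' bb, vFF]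
      · intro bb; rw [KH' bb, vHH]
      · intro bb; rw [KT' bb, vTT]
    | algebraMap r =>
      intro bb
      rw [Algebra.algebraMap_eq_smul_one, smul_mul_assoc, one_mul, map_smul, map_smul,
        vONE, mul_smul_comm, mul_one]
    | add u w hu hw ihu ihw =>
      intro bb; rw [add_mul, map_add, map_add, mul_add, ihu, ihw]
    | mul u w hu hw ihu ihw =>
      intro bb; rw [mul_assoc, ihu (w*bb), ihw bb, ihu w, mul_assoc]
  -- central elements of the gl2 part commuting with hh are fixed by η
  have NBfix : ∀ a cc dd : ℕ, M8 xx (-yy) (-x1) y1 tt hh ee ff 0 0 0 0 dd cc a a = M8 ee ff hh tt xx yy x1 y1 a a cc dd 0 0 0 0 := by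
    intro a cc dd
    have s1 : ∀ R : A, hh*(ee^a*(ff^a*R)) = ee^a*(ff^a*(hh*R)) := by
      intro R; rw [aux_eig hh ee 2 mHE, aux_eig hh ff (-2) mHF, mul_add, mul_smul_comm]; push_cast; module
    have s2 : ∀ R : A, hh^cc*(ee^a*(ff^a*R)) = ee^a*(ff^a*(hh^cc*R)) := by
      intro R
      induction cc generalizing R with
      | zero => simp
      | succ n ih => rw [pow_succ, mul_assoc, s1, ih]; simp only [mul_assoc]
    have s3 : ∀ R : A, tt*(ee^a*(ff^a*(hh^cc*R))) = ee^a*(ff^a*(hh^cc*(tt*R))) := by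
      intro R; rw [aux_comm tt ee cTE, aux_comm tt ff cTF, aux_comm tt hh cTH]
    have s4 : ∀ R : A, tt^dd*(ee^a*(ff^a*(hh^cc*R))) = ee^a*(ff^a*(hh^cc*(tt^dd*R))) := by
      intro R
      induction dd generalizing R with
      | zero => simp
      | succ n ih => rw [pow_succ, mul_assoc, s3, ih]; simp only [mul_assoc]
    simp only [M8, pow_zero, one_mul, mul_one]
    calc tt^dd*(hh^cc*(ee^a*ff^a))
        = tt^dd*(hh^cc*(ee^a*(ff^a*1))) := by rw [mul_one]
      _ = tt^dd*(ee^a*(ff^a*(hh^cc*1))) := by rw [s2]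
      _ = ee^a*(ff^a*(hh^cc*(tt^dd*1))) := s4 1
      _ = ee^a*(ff^a*(hh^cc*tt^dd)) := by rw [mul_one]
  have FixAD : ∀ z, z ∈ (Algebra.adjoin k ({ee, ff, hh, tt} : Set A)) →
      hh*z = z*hh → η z = z := by
    intro z hz hcomm
    classical
    set g4 : ℕ×ℕ×ℕ×ℕ → A := fun w => M8 ee ff hh tt xx yy x1 y1 w.1 w.2.1 w.2.2.1 w.2.2.2 0 0 0 0 with hg4
    set V4 : Submodule k A := Submodule.span k (Set.range g4) with hV4
    have memV4 : ∀ a b c d : ℕ, M8 ee ff hh tt xx yy x1 y1 a b c d 0 0 0 0 ∈ V4 :=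
      fun a b c d => Submodule.subset_span ⟨(a,b,c,d), rfl⟩
    have one4 : (1:A) ∈ V4 := by simpa [M8] using memV4 0 0 0 0
    have extend4 : ∀ g : A, (∀ a b c d, g * M8 ee ff hh tt xx yy x1 y1 a b c d 0 0 0 0 ∈ V4) →
        ∀ z' ∈ V4, g * z' ∈ V4 := by
      intro g hg z' hz'
      induction hz' using Submodule.span_induction with
      | mem w hw => obtain ⟨w4, rfl⟩ := hw; exact hg w4.1 w4.2.1 w4.2.2.1 w4.2.2.2
      | zero => rw [mul_zero]; exact zero_mem V4
      | add u w _ _ hu hw => rw [mul_add]; exact add_mem hu hw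
      | smul r u _ hu => rw [mul_smul_comm]; exact Submodule.smul_mem _ _ hu
    have hzV4 : z ∈ V4 := by
      have main : ∀ w, w ∈ (Algebra.adjoin k ({ee, ff, hh, tt} : Set A)) →
          (w ∈ V4 ∧ ∀ u ∈ V4, w*u ∈ V4) := by
        intro w hw
        induction hw using Algebra.adjoin_induction with
        | mem g hg =>
          simp only [Set.mem_insert_iff, Set.mem_singleton_iff] at hg
          rcases hg with rfl|rfl|rfl|rfl
          · exact ⟨by simpa [M8] using memV4 1 0 0 0,
              extend4 _ (fun a b c d => by rw [LM_E]; exact memV4 _ _ _ _)⟩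
          · refine ⟨by simpa [M8] using memV4 0 1 0 0, extend4 _ (fun a b c d => ?_)⟩
            rcases a with _|a'
            · rw [LM_F0]; exact memV4 _ _ _ _
            · rw [LM_F1 _ _ _ _ _ _ _ _ mFE mHE mHF]
              exact add_mem (add_mem (memV4 _ _ _ _) (zsmul_mem (memV4 _ _ _ _) _))
                (zsmul_mem (memV4 _ _ _ _) _)
          · refine ⟨by simpa [M8] using memV4 0 0 1 0, extend4 _ (fun a b c d => ?_)⟩
            rw [LM_H _ _ _ _ _ _ _ _ mHE mHF]
            exact add_mem (memV4 _ _ _ _) (zsmul_mem (memV4 _ _ _ _) _)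
          · refine ⟨by simpa [M8] using memV4 0 0 0 1, extend4 _ (fun a b c d => ?_)⟩
            rw [LM_T _ _ _ _ _ _ _ _ cTE cTF cTH]; exact memV4 _ _ _ _
        | algebraMap r =>
          exact ⟨by rw [Algebra.algebraMap_eq_smul_one]; exact Submodule.smul_mem _ _ one4,
            fun u hu => by rw [← Algebra.smul_def]; exact Submodule.smul_mem _ _ hu⟩
        | add u w hu hw ihu ihw =>
          exact ⟨add_mem ihu.1 ihw.1,
            fun u' hu' => by rw [add_mul]; exact add_mem (ihu.2 u' hu') (ihw.2 u' hu')⟩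
        | mul u w hu hw ihu ihw =>
          exact ⟨ihu.2 _ ihw.1,
            fun u' hu' => by rw [mul_assoc]; exact ihu.2 _ (ihw.2 u' hu')⟩
      exact (main z hz).1
    have hLIg4 : LinearIndependent k g4 := by
      have hι : Function.Injective (fun w : ℕ×ℕ×ℕ×ℕ =>
          (![w.1, w.2.1, w.2.2.1, w.2.2.2, 0,0,0,0] : Fin 8 → ℕ)) := by
        intro z1 z2 hzw
        have h0 := congrFun hzw 0
        have h1 := congrFun hzw 1
        have h2 := congrFun hzw 2
        have h3 := congrFun hzw 3
        exact Prod.ext h0 (Prod.ext h1 (Prod.ext h2 h3))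
      have hcomp := hPBW.comp _ hι
      have hfeq : g4 = v8 ∘ (fun w : ℕ×ℕ×ℕ×ℕ =>
          (![w.1, w.2.1, w.2.2.1, w.2.2.2, 0,0,0,0] : Fin 8 → ℕ)) := by
        funext w
        show g4 w = v8 ![w.1, w.2.1, w.2.2.1, w.2.2.2, 0,0,0,0]
        rw [famM2]; rfl
      rwa [hfeq]
    obtain ⟨cz, hcz⟩ := Finsupp.mem_span_range_iff_exists_finsupp.mp hzV4
    have hwform : ∀ i : ℕ×ℕ×ℕ×ℕ,
        hh * g4 i - g4 i * hh = (((2*(i.1:ℤ) - 2*(i.2.1:ℤ) : ℤ)):k) • g4 i := by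
      intro i
      have hl : hh * g4 i = M8 ee ff hh tt xx yy x1 y1 i.1 i.2.1 (i.2.2.1+1) i.2.2.2 0 0 0 0
          + (2*(i.1:ℤ) - 2*(i.2.1:ℤ))•(g4 i) :=
        LM_H _ _ _ _ _ _ _ _ mHE mHF _ _ _ _ _ _ _ _
      have hr : g4 i * hh = M8 ee ff hh tt xx yy x1 y1 i.1 i.2.1 (i.2.2.1+1) i.2.2.2 0 0 0 0 :=
        (App_Hc _ _ _ _ _ _ _ _ cTH.symm _ _ _ _).symm
      rw [hl, hr, show ((((2*(i.1:ℤ) - 2*(i.2.1:ℤ) : ℤ)):k) • g4 i)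
        = (2*(i.1:ℤ) - 2*(i.2.1:ℤ)) • g4 i from Int.cast_smul_eq_zsmul k _ _]
      abel
    have hsum0 : (cz.sum fun i a => (a * (((2*(i.1:ℤ) - 2*(i.2.1:ℤ) : ℤ)):k)) • g4 i) = 0 := by
      have hdiff : hh*z - z*hh = cz.sum fun i a => (a * (((2*(i.1:ℤ) - 2*(i.2.1:ℤ) : ℤ)):k)) • g4 i := by
        rw [← hcz, Finsupp.mul_sum, Finsupp.sum_mul, ← Finsupp.sum_sub]
        apply Finsupp.sum_congr
        intro i _
        rw [mul_smul_comm, smul_mul_assoc, ← smul_sub, hwform i, smul_smul]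
      rw [← hdiff, hcomm, sub_self]
    have hbal : ∀ i ∈ cz.support, cz i * (((2*(i.1:ℤ) - 2*(i.2.1:ℤ) : ℤ)):k) = 0 := by
      have h := linearIndependent_iff'.mp hLIg4 cz.support
        (fun i => cz i * (((2*(i.1:ℤ) - 2*(i.2.1:ℤ) : ℤ)):k)) ?_
      · exact h
      · rw [← hsum0]; rfl
    have hη : η z = cz.sum fun i a => a • η (g4 i) := by
      rw [← hcz, map_finsuppSum]
      apply Finsupp.sum_congr
      intro i _
      rw [map_smul]
    rw [hη, ← hcz]
    apply Finsupp.sum_congr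
    intro i hi
    by_cases he : i.1 = i.2.1
    · obtain ⟨a1, b1, c1, d1⟩ := i
      simp only at he
      subst he
      rw [hg4]
      simp only
      rw [ηMon, NBfix]
    · have h0 : cz i = 0 := by
        rcases mul_eq_zero.mp (hbal i hi) with h|h
        · exact h
        · exfalso
          have : (2*(i.1:ℤ) - 2*(i.2.1:ℤ)) = 0 := by exact_mod_cast h
          omega
      rw [h0, zero_smul, zero_smul]
  have ηfc : η fc = fc := FixAD fc hfcmmem ((hfcmc hh hhh).symm)
  have ηgc : η gc = gc := FixAD gc hgcmmem ((hgcmc hh hhh).symm)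

  have cFCh := hfcmc hh hhh
  have cFCe := hfcmc ee hee
  have cFCf := hfcmc ff hff
  have η4efc : η (4*ee*fc) = 4*(fc*ff) := by
    have h1 : (4*ee*fc : A) = (4:ℕ)•(ee*fc) := by push_cast [nsmul_eq_mul]; first | noncomm_ring | abel
    rw [h1, map_nsmul, KE' fc, ηfc]
    push_cast [nsmul_eq_mul]; first | noncomm_ring | abel
  have η2hfc : η (2*hh*fc) = 2*(fc*hh) := by
    have h1 : (2*hh*fc : A) = (2:ℕ)•(hh*fc) := by push_cast [nsmul_eq_mul]; first | noncomm_ring | abel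
    rw [h1, map_nsmul, KH' fc, ηfc]
    push_cast [nsmul_eq_mul]; first | noncomm_ring | abel
  have η4ffc : η (4*ff*fc) = 4*(fc*ee) := by
    have h1 : (4*ff*fc : A) = (4:ℕ)•(ff*fc) := by push_cast [nsmul_eq_mul]; first | noncomm_ring | abel
    rw [h1, map_nsmul, KF' fc, ηfc]
    push_cast [nsmul_eq_mul]; first | noncomm_ring | abel
  have ηYXv : η (2*hh*fc + gc) = 2*(fc*hh) + gc := by rw [map_add, η2hfc, ηgc]
  have ηX1Yv : η (2*hh*fc - gc) = 2*(fc*hh) - gc := by rw [map_sub, η2hfc, ηgc]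
  -- single letter identities on the image side
  have hX1Y1c : (-x1)*y1 = y1*(-x1) := by rw [neg_mul, mul_neg, mY1X1]
  have cXmY : xx*(-yy) = (-yy)*xx := by rw [mul_neg, neg_mul, mYX]
  have idXF : y1*ee + x1 = ee*y1 := by rw [mY1E]; first | noncomm_ring | abel
  have idXH : y1*hh + -y1 = hh*y1 := by rw [mY1H]; first | noncomm_ring | abel
  have idXT : y1*tt + -y1 = tt*y1 := by rw [mY1T]; first | noncomm_ring | abel
  have idYE : (-x1)*ff + -y1 = ff*(-x1) := by rw [neg_mul, mX1F]; first | noncomm_ring | abel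
  have idYF : (-x1)*ee = ee*(-x1) := by rw [neg_mul, mX1E, mul_neg]
  have idYH : (-x1)*hh + -x1 = hh*(-x1) := by rw [neg_mul, mX1H]; first | noncomm_ring | abel
  have idYT : (-x1)*tt + x1 = tt*(-x1) := by rw [neg_mul, mX1T]; first | noncomm_ring | abel
  have KXY : ∀ n a b c d p q r s : ℕ, a+b+c+d = n →
      η (xx * M8 ee ff hh tt xx yy x1 y1 a b c d p q r s) = M8 xx (-yy) (-x1) y1 tt hh ee ff s r q p d c b a * y1 ∧
      η (yy * M8 ee ff hh tt xx yy x1 y1 a b c d p q r s) = M8 xx (-yy) (-x1) y1 tt hh ee ff s r q p d c b a * (-x1) := by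
    intro n
    induction n with
    | zero =>
      intro a b c d p q r s hn
      obtain rfl : a = 0 := by omega
      obtain rfl : b = 0 := by omega
      obtain rfl : c = 0 := by omega
      obtain rfl : d = 0 := by omega
      constructor
      · rw [← Pre_X, ηMon]
        exact App_T _ _ _ _ _ _ _ _ _ _ _ _
      · rw [Bse_Y _ _ _ _ _ _ _ _ mYX, ηMon]
        exact App_Hc _ _ _ _ _ _ _ _ hX1Y1c _ _ _ _
    | succ n ih =>
      intro a b c d p q r s hn
      rcases a with _|a'
      · rcases b with _|b'
        · rcases c with _|c'
          · rcases d with _|d'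
            · omega
            · constructor
              · rw [Pre_T, stepc xx tt (-xx) mXT, map_add, KT',
                  (ih 0 0 0 d' p q r s (by omega)).1, neg_mul, map_neg,
                  (ih 0 0 0 d' p q r s (by omega)).1, App_X]
                simp only [mul_assoc, ← mul_neg, ← mul_add, neg_neg]
                rw [idXT]
              · rw [Pre_T, stepc yy tt (-yy) mYT, map_add, KT',
                  (ih 0 0 0 d' p q r s (by omega)).2, neg_mul, map_neg,
                  (ih 0 0 0 d' p q r s (by omega)).2, App_X]
                simp only [mul_assoc, ← mul_neg, ← mul_add, neg_neg]
                rw [idYT]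
          · constructor
            · rw [Pre_H, stepc xx hh (-xx) mXH, map_add, KH',
                (ih 0 0 c' d p q r s (by omega)).1, neg_mul, map_neg,
                (ih 0 0 c' d p q r s (by omega)).1, App_Y]
              simp only [mul_assoc, ← mul_neg, ← mul_add, neg_neg]
              rw [idXH]
            · rw [Pre_H, stepc yy hh yy mYH, map_add, KH',
                (ih 0 0 c' d p q r s (by omega)).2, App_Y]
              simp only [mul_assoc, ← mul_neg, ← mul_add, neg_neg]
              rw [idYH]
        · constructor
          · rw [Pre_F, stepc xx ff (-yy) mXF, map_add, KF',
              (ih 0 b' c d p q r s (by omega)).1, neg_mul, map_neg,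
              (ih 0 b' c d p q r s (by omega)).2, App_U]
            simp only [mul_assoc, ← mul_neg, ← mul_add, neg_neg]
            rw [idXF]
          · rw [Pre_F, stepz yy ff mYF, KF',
              (ih 0 b' c d p q r s (by omega)).2, App_U]
            simp only [mul_assoc]
            rw [idYF]
      · constructor
        · rw [Pre_E, stepz xx ee mXE, KE',
            (ih a' b c d p q r s (by omega)).1, App_V]
          simp only [mul_assoc]
          rw [mY1F]
        · rw [Pre_E, stepc yy ee (-xx) mYE, map_add, KE',
            (ih a' b c d p q r s (by omega)).2, neg_mul, map_neg,
            (ih a' b c d p q r s (by omega)).1, App_V]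
          simp only [mul_assoc, ← mul_neg, ← mul_add, neg_neg]
          rw [idYE]
  have KX' := extendK xx y1 (fun a b c d p q r s => (KXY (a+b+c+d) a b c d p q r s rfl).1)
  have KY' := extendK yy (-x1) (fun a b c d p q r s => (KXY (a+b+c+d) a b c d p q r s rfl).2)
  -- identities for the x1/y1 cases
  have idAE : (-yy)*ff = ff*(-yy) := by rw [neg_mul, mYF, mul_neg]
  have idAF : (-yy)*ee + -xx = ee*(-yy) := by rw [neg_mul, mYE]; first | noncomm_ring | abel
  have idAH : (-yy)*hh + yy = hh*(-yy) := by rw [neg_mul, mYH]; first | noncomm_ring | abel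
  have idAT : (-yy)*tt + -yy = tt*(-yy) := by rw [neg_mul, mYT]; first | noncomm_ring | abel
  have idBX : (-yy)*y1 + 4*(fc*(-ff)) = y1*(-yy) := by
    rw [show (fc*(-ff) : A) = -(ff*fc) by rw [mul_neg, cFCf], neg_mul, mul_neg, mul_neg, mY1Y]
    first | noncomm_ring | abel
  have idBY : (-yy)*(-x1) + (2*(fc*hh) - gc) = (-x1)*(-yy) := by
    rw [neg_mul_neg, neg_mul_neg, mX1Y, cFCh]; first | noncomm_ring | abel
  have idCE : xx*ff + yy = ff*xx := by rw [mXF]; first | noncomm_ring | abel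
  have idCH : xx*hh + xx = hh*xx := by rw [mXH]; first | noncomm_ring | abel
  have idCT : xx*tt + xx = tt*xx := by rw [mXT]; first | noncomm_ring | abel
  have idCX : xx*y1 + (2*(fc*hh) + gc) = y1*xx := by rw [mY1X, cFCh]; first | noncomm_ring | abel
  have idCY : xx*(-x1) + 4*(fc*ee) = (-x1)*xx := by
    rw [mul_neg, neg_mul, mX1X, cFCe]; first | noncomm_ring | abel
  have KX1Y1 : ∀ n a b c d p q r s : ℕ, a+b+c+d+p+q = n →
      η (x1 * M8 ee ff hh tt xx yy x1 y1 a b c d p q r s) = M8 xx (-yy) (-x1) y1 tt hh ee ff s r q p d c b a * (-yy) ∧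
      η (y1 * M8 ee ff hh tt xx yy x1 y1 a b c d p q r s) = M8 xx (-yy) (-x1) y1 tt hh ee ff s r q p d c b a * xx := by
    intro n
    induction n with
    | zero =>
      intro a b c d p q r s hn
      obtain rfl : a = 0 := by omega
      obtain rfl : b = 0 := by omega
      obtain rfl : c = 0 := by omega
      obtain rfl : d = 0 := by omega
      obtain rfl : p = 0 := by omega
      obtain rfl : q = 0 := by omega
      constructor
      · rw [← Pre_U, ηMon]
        exact App_F _ _ _ _ _ _ _ _ _ _
      · rw [Bse_V _ _ _ _ _ _ _ _ mY1X1, ηMon]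
        exact App_Ec _ _ _ _ _ _ _ _ cXmY _ _
    | succ n ih =>
      intro a b c d p q r s hn
      rcases a with _|a'
      · rcases b with _|b'
        · rcases c with _|c'
          · rcases d with _|d'
            · rcases p with _|p'
              · rcases q with _|q'
                · omega
                · constructor
                  · rw [Pre_Y, stepc x1 yy (2*hh*fc - gc) mX1Y, map_add, KY',
                      (ih 0 0 0 0 0 q' r s (by omega)).1, adD _ memX1Y, ηMon, ηX1Yv, App_H]
                    simp only [mul_assoc, ← mul_neg, ← mul_add, neg_neg]
                    rw [idBY]
                  · rw [Pre_Y, stepc y1 yy (4*ff*fc) mY1Y, map_add, KY',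
                      (ih 0 0 0 0 0 q' r s (by omega)).2, adD _ memY1Y, ηMon, η4ffc, App_H]
                    simp only [mul_assoc, ← mul_neg, ← mul_add, neg_neg]
                    rw [idCY]
              · constructor
                · rw [Pre_X, stepc x1 xx (-(4*ee*fc)) mX1X, map_add, KX',
                    (ih 0 0 0 0 p' q r s (by omega)).1, neg_mul, map_neg, adD _ mem4,
                    ηMon, η4efc, App_T]
                  simp only [mul_assoc, ← mul_neg, ← mul_add, neg_neg]
                  rw [idBX]
                · rw [Pre_X, stepc y1 xx (2*hh*fc + gc) mY1X, map_add, KX',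
                    (ih 0 0 0 0 p' q r s (by omega)).2, adD _ memY1X, ηMon, ηYXv, App_T]
                  simp only [mul_assoc, ← mul_neg, ← mul_add, neg_neg]
                  rw [idCX]
            · constructor
              · rw [Pre_T, stepc x1 tt x1 mX1T, map_add, KT',
                  (ih 0 0 0 d' p q r s (by omega)).1, App_X]
                simp only [mul_assoc, ← mul_neg, ← mul_add, neg_neg]
                rw [idAT]
              · rw [Pre_T, stepc y1 tt y1 mY1T, map_add, KT',
                  (ih 0 0 0 d' p q r s (by omega)).2, App_X]
                simp only [mul_assoc, ← mul_neg, ← mul_add, neg_neg]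
                rw [idCT]
          · constructor
            · rw [Pre_H, stepc x1 hh (-x1) mX1H, map_add, KH',
                (ih 0 0 c' d p q r s (by omega)).1, neg_mul, map_neg,
                (ih 0 0 c' d p q r s (by omega)).1, App_Y]
              simp only [mul_assoc, ← mul_neg, ← mul_add, neg_neg]
              rw [idAH]
            · rw [Pre_H, stepc y1 hh y1 mY1H, map_add, KH',
                (ih 0 0 c' d p q r s (by omega)).2, App_Y]
              simp only [mul_assoc, ← mul_neg, ← mul_add, neg_neg]
              rw [idCH]
        · constructor
          · rw [Pre_F, stepc x1 ff (-y1) mX1F, map_add, KF',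
              (ih 0 b' c d p q r s (by omega)).1, neg_mul, map_neg,
              (ih 0 b' c d p q r s (by omega)).2, App_U]
            simp only [mul_assoc, ← mul_neg, ← mul_add, neg_neg]
            rw [idAF]
          · rw [Pre_F, stepz y1 ff mY1F, KF',
              (ih 0 b' c d p q r s (by omega)).2, App_U]
            simp only [mul_assoc]
            rw [mXE]
      · constructor
        · rw [Pre_E, stepz x1 ee mX1E, KE',
            (ih a' b c d p q r s (by omega)).1, App_V]
          simp only [mul_assoc]
          rw [idAE]
        · rw [Pre_E, stepc y1 ee (-x1) mY1E, map_add, KE',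
            (ih a' b c d p q r s (by omega)).2, neg_mul, map_neg,
            (ih a' b c d p q r s (by omega)).1, App_V]
          simp only [mul_assoc, ← mul_neg, ← mul_add, neg_neg]
          rw [idCE]
  have KX1' := extendK x1 (-yy)
    (fun a b c d p q r s => (KX1Y1 (a+b+c+d+p+q) a b c d p q r s rfl).1)
  have KY1' := extendK y1 xx
    (fun a b c d p q r s => (KX1Y1 (a+b+c+d+p+q) a b c d p q r s rfl).2)
  have antiMul : ∀ aa bb : A, η (aa * bb) = η bb * η aa := by
    intro aa
    have haa : aa ∈ Algebra.adjoin k ({ee, ff, hh, tt, xx, yy, x1, y1} : Set A) := by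
      rw [hgen]; trivial
    induction haa using Algebra.adjoin_induction with
    | mem g hg =>
      simp only [Set.mem_insert_iff, Set.mem_singleton_iff] at hg
      rcases hg with rfl|rfl|rfl|rfl|rfl|rfl|rfl|rfl
      · intro bb; rw [KE' bb, vEE]
      · intro bb; rw [KF' bb, vFF]
      · intro bb; rw [KH' bb, vHH]
      · intro bb; rw [KT' bb, vTT]
      · intro bb; rw [KX' bb, vXX]
      · intro bb; rw [KY' bb, vYY]
      · intro bb; rw [KX1' bb, vX1]
      · intro bb; rw [KY1' bb, vY1]
    | algebraMap r =>
      intro bb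
      rw [Algebra.algebraMap_eq_smul_one, smul_mul_assoc, one_mul, map_smul, map_smul,
        vONE, mul_smul_comm, mul_one]
    | add u w hu hw ihu ihw =>
      intro bb; rw [add_mul, map_add, map_add, mul_add, ihu, ihw]
    | mul u w hu hw ihu ihw =>
      intro bb; rw [mul_assoc, ihu (w*bb), ihw bb, ihu w, mul_assoc]
  have invol : ∀ aa : A, η (η aa) = aa := by
    intro aa
    have haa : aa ∈ Algebra.adjoin k ({ee, ff, hh, tt, xx, yy, x1, y1} : Set A) := by
      rw [hgen]; trivial
    induction haa using Algebra.adjoin_induction with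
    | mem g hg =>
      simp only [Set.mem_insert_iff, Set.mem_singleton_iff] at hg
      rcases hg with rfl|rfl|rfl|rfl|rfl|rfl|rfl|rfl
      · rw [vEE, vFF]
      · rw [vFF, vEE]
      · rw [vHH, vHH]
      · rw [vTT, vTT]
      · rw [vXX, vY1]
      · rw [vYY, map_neg, vX1, neg_neg]
      · rw [vX1, map_neg, vYY, neg_neg]
      · rw [vY1, vXX]
    | algebraMap r =>
      rw [Algebra.algebraMap_eq_smul_one, map_smul, map_smul, vONE, vONE]
    | add u w hu hw ihu ihw => rw [map_add, map_add, ihu, ihw]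
    | mul u w hu hw ihu ihw =>
      rw [antiMul u w, antiMul (η w) (η u), ihu, ihw]
  exact ⟨η, antiMul, invol, vXX, vX1, vY1, vYY, vEE, vFF, vHH, vTT⟩
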